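/- Let X ⊂ ℝ³ be a discrete set such that the translates C₃ + x, x ∈ X, cover ℝ³, and suppose some point of P is covered and that at least 28 translates C₃ + xᵢ meet a fixed translate C₃ + x₀ containing the origin. Then the density ∑_{x∈X} vol(P ∩ (C₃+x)) / vol(P) is at least 1 + 1/96, where P = conv{(±8,0,0),(0,±8,0),(0,0,±8),(8,8,8),(-8,-8,-8)}. -/

import Mathlib

open Set Pointwise MeasureTheory ENNReal

/-- The regular octahedron `C₃` (the ℓ¹-ball of radius 2 in ℝ³). -/
def C₃ : Set (Fin 3 → ℝ) := {p | |p 0| + |p 1| + |p 2| ≤ 2}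

/-- The parallelohedron `P`, the convex hull of the eight listed points. -/
def P : Set (Fin 3 → ℝ) :=
  convexHull ℝ
    {![8, 0, 0], ![-8, 0, 0], ![0, 8, 0], ![0, -8, 0],
     ![0, 0, 8], ![0, 0, -8], ![8, 8, 8], ![-8, -8, -8]}

/- Auxiliary material -/

@[simp] lemma fin3_mk_zero (h : 0 < 3) : (⟨0,h⟩ : Fin 3) = 0 := rfl
@[simp] lemma fin3_mk_one (h : 1 < 3) : (⟨1,h⟩ : Fin 3) = 1 := rfl
@[simp] lemma fin3_mk_two (h : 2 < 3) : (⟨2,h⟩ : Fin 3) = 2 := rfl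

@[simp] lemma cons_val_five {α : Type*} (a₀ a₁ a₂ a₃ a₄ a₅ : α) :
    ![a₀,a₁,a₂,a₃,a₄,a₅] 5 = a₅ := rfl
@[simp] lemma cons_val_four' {α : Type*} (a₀ a₁ a₂ a₃ a₄ a₅ : α) :
    ![a₀,a₁,a₂,a₃,a₄,a₅] 4 = a₄ := rfl
@[simp] lemma cons_val_three' {α : Type*} (a₀ a₁ a₂ a₃ a₄ a₅ : α) :
    ![a₀,a₁,a₂,a₃,a₄,a₅] 3 = a₃ := rfl

/-- The ℓ¹-ball of radius `r` in ℝ³. -/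
def Ball (r : ℝ) : Set (Fin 3 → ℝ) := {p | |p 0| + |p 1| + |p 2| ≤ r}

lemma C₃_eq_ball : C₃ = Ball 2 := rfl

lemma volume_Ball (r : ℝ) (hr : 0 ≤ r) :
    volume (Ball r) = ENNReal.ofReal (4/3 * r^3) := by
  have := MeasureTheory.volume_sum_rpow_le (Fin 3) (le_refl (1:ℝ)) r
  simp only [Real.rpow_one, one_div, inv_one, Fin.sum_univ_three, Fintype.card_fin] at this
  rw [Ball, this]
  norm_num [Nat.factorial]
  rw [← ENNReal.ofReal_pow hr, ← ENNReal.ofReal_mul (by positivity)]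
  rw [show r^3 * (4/3) = 4/3 * r^3 by ring]
  rw [← ENNReal.ofReal_mul (by norm_num)]

lemma volume_vadd (x : Fin 3 → ℝ) (s : Set (Fin 3 → ℝ)) : volume (x +ᵥ s) = volume s := by
  rw [show x +ᵥ s = (x + ·) '' s from rfl, image_add_left, measure_preimage_add]

lemma Ball_measurable (r : ℝ) : MeasurableSet (Ball r) := by
  have : IsClosed (Ball r) := by
    apply isClosed_le _ continuous_const
    fun_prop
  exact this.measurableSet

lemma mem_vadd_C₃ {y p : Fin 3 → ℝ} :
    p ∈ y +ᵥ C₃ ↔ |p 0 - y 0| + |p 1 - y 1| + |p 2 - y 2| ≤ 2 := by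
  rw [mem_vadd_set_iff_neg_vadd_mem]
  simp only [C₃, vadd_eq_add, mem_setOf_eq, Pi.add_apply, Pi.neg_apply, neg_add_eq_sub, Pi.sub_apply]

lemma ball8_subset_P (p : Fin 3 → ℝ) (hp : |p 0| + |p 1| + |p 2| ≤ 8) : p ∈ P := by
  set t : ℝ := 8 - (|p 0| + |p 1| + |p 2|) with ht
  have ht0 : 0 ≤ t := by simp [ht]; linarith
  set w : Fin 6 → ℝ := ![(|p 0| + p 0 + t)/16, (|p 0| - p 0 + t)/16,
    (|p 1| + p 1)/16, (|p 1| - p 1)/16, (|p 2| + p 2)/16, (|p 2| - p 2)/16] with hw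
  set v : Fin 6 → (Fin 3 → ℝ) := ![![8,0,0], ![-8,0,0], ![0,8,0], ![0,-8,0], ![0,0,8], ![0,0,-8]]
    with hv
  have habs : ∀ i, 0 ≤ |p i| + p i ∧ 0 ≤ |p i| - p i := fun i =>
    ⟨by have := neg_abs_le (p i); linarith, by have := le_abs_self (p i); linarith⟩
  have hwpos : ∀ i ∈ Finset.univ, 0 ≤ w i := by
    intro i _
    fin_cases i <;> simp [hw, Matrix.cons_val_succ] <;>
      first
        | (have := (habs 0).1; have := (habs 0).2; linarith)
        | (have := (habs 1).1; have := (habs 1).2; linarith)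
        | (have := (habs 2).1; have := (habs 2).2; linarith)
  have hwsum : ∑ i, w i = 1 := by
    simp only [hw, Fin.sum_univ_six, Matrix.cons_val_zero, Matrix.cons_val_one,
      Matrix.head_cons, Matrix.cons_val_two, Matrix.vecTail, Matrix.vecHead,
      cons_val_three', cons_val_four', cons_val_five, Function.comp_apply,
      Fin.succ_zero_eq_one, Fin.succ_one_eq_two]
    rw [ht]; ring
  have hvmem : ∀ i ∈ Finset.univ, v i ∈ P := by
    intro i _
    refine subset_convexHull ℝ _ ?_
    fin_cases i <;> simp [hv, P, Matrix.cons_val_succ]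
  have := (convex_convexHull ℝ
    ({![8, 0, 0], ![-8, 0, 0], ![0, 8, 0], ![0, -8, 0],
     ![0, 0, 8], ![0, 0, -8], ![8, 8, 8], ![-8, -8, -8]} : Set (Fin 3 → ℝ))).sum_mem
     hwpos hwsum hvmem
  change _ ∈ P at this
  convert this using 1
  funext j
  rw [Finset.sum_apply]
  fin_cases j <;>
    · simp only [hw, hv, Fin.sum_univ_six, Matrix.cons_val_zero, Matrix.cons_val_one,
        Matrix.head_cons, Matrix.cons_val_two, Matrix.vecTail, Matrix.vecHead,
        cons_val_three', cons_val_four', cons_val_five, Function.comp_apply,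
        Fin.succ_zero_eq_one, Fin.succ_one_eq_two, smul_eq_mul, Pi.smul_apply, Fin.isValue,
        fin3_mk_zero, fin3_mk_one, fin3_mk_two]
      ring

noncomputable def T : (Fin 3 → ℝ) →ₗ[ℝ] (Fin 3 → ℝ) :=
  Matrix.toLin' !![1, 1, -1; 1, -1, 1; -1, 1, 1]

lemma volume_P_le : volume P ≤ ENNReal.ofReal 1024 := by
  have hdet : LinearMap.det T = -4 := by
    simp [T, LinearMap.det_toLin', Matrix.det_fin_three, Matrix.vecHead, Matrix.vecTail]
    norm_num
  have hsub : P ⊆ T ⁻¹' (Set.pi Set.univ fun _ : Fin 3 => Icc (-8:ℝ) 8) := by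
    rw [P]
    apply convexHull_min
    · intro v hv
      simp only [mem_insert_iff, mem_singleton_iff] at hv
      rcases hv with h|h|h|h|h|h|h|h <;> subst h <;>
        · intro i _
          fin_cases i <;>
            simp [T, Matrix.toLin'_apply, Matrix.mulVec, dotProduct,
                Fin.sum_univ_three]
    · exact (convex_pi fun i _ => convex_Icc _ _).linear_preimage T
  calc volume P ≤ volume (T ⁻¹' (Set.pi Set.univ fun _ : Fin 3 => Icc (-8:ℝ) 8)) :=
        measure_mono hsub
    _ = ENNReal.ofReal |(LinearMap.det T)⁻¹| *
          volume (Set.pi Set.univ fun _ : Fin 3 => Icc (-8:ℝ) 8) := by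
        rw [Measure.addHaar_preimage_linearMap volume (by rw [hdet]; norm_num)]
    _ = ENNReal.ofReal 1024 := by
        rw [hdet, volume_pi_pi]
        simp only [Real.volume_Icc, Finset.prod_const, Finset.card_univ, Fintype.card_fin]
        rw [← ENNReal.ofReal_pow (by norm_num), ← ENNReal.ofReal_mul (by positivity)]
        congr 1
        rw [show |((-4:ℝ))⁻¹| = 1/4 by rw [abs_eq (by norm_num : (0:ℝ) ≤ 1/4)]; norm_num]
        norm_num

lemma volume_P_ge : ENNReal.ofReal (2048/3) ≤ volume P := by
  have : Ball 8 ⊆ P := fun p hp => ball8_subset_P p hp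
  calc ENNReal.ofReal (2048/3) = volume (Ball 8) := by
        rw [volume_Ball 8 (by norm_num)]; norm_num
    _ ≤ volume P := measure_mono this

/-- abs triangle helper -/
lemma abs_helper (a b : ℝ) : |a| ≤ |a - b| + |b| := by
  have := abs_add_le (a - b) b; simpa using this

theorem density_ge_of_many_neighbors (X : Set (Fin 3 → ℝ))
    (hdisc : DiscreteTopology ↥X)
    (hcov : ⋃ x ∈ X, x +ᵥ C₃ = univ)
    (x₀ : Fin 3 → ℝ) (hx₀ : x₀ ∈ X) (h0 : (0 : Fin 3 → ℝ) ∈ x₀ +ᵥ C₃)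
    (S : Finset (Fin 3 → ℝ)) (hS : ↑S ⊆ X) (hcard : 28 ≤ S.card)
    (hmeets : ∀ y ∈ S, ((y +ᵥ C₃) ∩ (x₀ +ᵥ C₃)).Nonempty) :
    (1 + 1 / 96 : ℝ≥0∞) ≤
      (∑' x : X, volume (P ∩ ((x : Fin 3 → ℝ) +ᵥ C₃))) / volume P := by
  have hXc : Countable ↥X := countable_of_Lindelof_of_discrete
  -- the enlarged ball around x₀
  set B : Set (Fin 3 → ℝ) := x₀ +ᵥ Ball 6 with hBdef
  have hBmem : ∀ p, p ∈ B ↔ |p 0 - x₀ 0| + |p 1 - x₀ 1| + |p 2 - x₀ 2| ≤ 6 := by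
    intro p
    rw [hBdef, mem_vadd_set_iff_neg_vadd_mem]
    simp only [Ball, vadd_eq_add, mem_setOf_eq, Pi.add_apply, Pi.neg_apply, neg_add_eq_sub, Pi.sub_apply]
  have hBmeas : MeasurableSet B := by
    rw [hBdef, show x₀ +ᵥ Ball 6 = (x₀ + ·) '' Ball 6 from rfl, image_add_left]
    exact (Ball_measurable 6).preimage (measurable_const_add _)
  have hBvol : volume B = ENNReal.ofReal 288 := by
    rw [hBdef, volume_vadd, volume_Ball 6 (by norm_num)]
    norm_num
  -- basic ℓ¹ facts
  have hx₀2 : |x₀ 0| + |x₀ 1| + |x₀ 2| ≤ 2 := by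
    have := mem_vadd_C₃.mp h0
    simp only [Pi.zero_apply, zero_sub, abs_neg] at this
    exact this
  have hyd : ∀ y ∈ S, |y 0 - x₀ 0| + |y 1 - x₀ 1| + |y 2 - x₀ 2| ≤ 4 := by
    intro y hy
    obtain ⟨q, hq1, hq2⟩ := hmeets y hy
    rw [mem_vadd_C₃] at hq1 hq2
    have t0 := abs_sub_le (y 0) (q 0) (x₀ 0)
    have t1 := abs_sub_le (y 1) (q 1) (x₀ 1)
    have t2 := abs_sub_le (y 2) (q 2) (x₀ 2)
    have a0 := abs_sub_comm (q 0) (y 0)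
    have a1 := abs_sub_comm (q 1) (y 1)
    have a2 := abs_sub_comm (q 2) (y 2)
    rw [a0] at hq1 <;> rw [a1] at hq1 <;> rw [a2] at hq1
    linarith [hq1, hq2, t0, t1, t2]
  -- each translate from S is inside both P and B
  have hyP : ∀ y ∈ S, (y +ᵥ C₃) ⊆ P := by
    intro y hy p hp
    rw [mem_vadd_C₃] at hp
    apply ball8_subset_P
    have h0' := abs_helper (p 0) (y 0)
    have h1' := abs_helper (p 1) (y 1)
    have h2' := abs_helper (p 2) (y 2)
    have hy0 := abs_helper (y 0) (x₀ 0)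
    have hy1 := abs_helper (y 1) (x₀ 1)
    have hy2 := abs_helper (y 2) (x₀ 2)
    have := hyd y hy
    linarith [hx₀2]
  have hyB : ∀ y ∈ S, (y +ᵥ C₃) ⊆ B := by
    intro y hy p hp
    rw [mem_vadd_C₃] at hp
    rw [hBmem]
    have t0 := abs_sub_le (p 0) (y 0) (x₀ 0)
    have t1 := abs_sub_le (p 1) (y 1) (x₀ 1)
    have t2 := abs_sub_le (p 2) (y 2) (x₀ 2)
    have := hyd y hy
    linarith
  -- volume of C₃
  have hC₃vol : volume C₃ = ENNReal.ofReal (32/3) := by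
    rw [C₃_eq_ball, volume_Ball 2 (by norm_num)]
    norm_num
  -- split each term along B
  set N := ∑' x : X, volume (P ∩ ((x : Fin 3 → ℝ) +ᵥ C₃)) with hN
  have hsplit : N = (∑' x : X, volume ((P ∩ ((x : Fin 3 → ℝ) +ᵥ C₃)) ∩ B))
      + ∑' x : X, volume ((P \ B) ∩ ((x : Fin 3 → ℝ) +ᵥ C₃)) := by
    have hset : ∀ T : Set (Fin 3 → ℝ), (P ∩ T) \ B = (P \ B) ∩ T := by
      intro T
      ext p
      simp only [mem_diff, mem_inter_iff]
      tauto
    rw [hN, ← ENNReal.tsum_add]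
    refine tsum_congr fun x => ?_
    rw [← measure_inter_add_diff (P ∩ ((x : Fin 3 → ℝ) +ᵥ C₃)) hBmeas, hset]
  -- lower bound on the part outside B
  have houter : volume P - ENNReal.ofReal 288 ≤
      ∑' x : X, volume ((P \ B) ∩ ((x : Fin 3 → ℝ) +ᵥ C₃)) := by
    have hcov' : ⋃ x : X, ((x : Fin 3 → ℝ) +ᵥ C₃) = univ := by
      rw [← hcov, iUnion_coe_set]
    have h1 : volume (P \ B) ≤ ∑' x : X, volume ((P \ B) ∩ ((x : Fin 3 → ℝ) +ᵥ C₃)) := by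
      have heq : P \ B = ⋃ x : X, ((P \ B) ∩ ((x : Fin 3 → ℝ) +ᵥ C₃)) := by
        rw [← inter_iUnion, hcov', inter_univ]
      exact le_trans (le_of_eq (congrArg volume heq)) (measure_iUnion_le _)
    refine le_trans ?_ h1
    rw [← hBvol]
    exact le_measure_diff
  -- lower bound on the part from S
  have hinner : ENNReal.ofReal (896/3) ≤
      ∑' x : X, volume ((P ∩ ((x : Fin 3 → ℝ) +ᵥ C₃)) ∩ B) := by
    set S' : Finset ↥X := S.attach.image (fun y => (⟨y.1, hS y.2⟩ : ↥X)) with hS'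
    have hS'card : S'.card = S.card := by
      rw [hS', Finset.card_image_of_injective _ (fun a b hab => by
        apply Subtype.ext
        simpa using congrArg Subtype.val hab), Finset.card_attach]
    have hterm : ∀ x ∈ S', ENNReal.ofReal (32/3) ≤
        volume ((P ∩ ((x : Fin 3 → ℝ) +ᵥ C₃)) ∩ B) := by
      intro x hx
      rw [hS', Finset.mem_image] at hx
      obtain ⟨y, hy, rfl⟩ := hx
      have hyS : (y : Fin 3 → ℝ) ∈ S := y.2
      have hsub : ((y : Fin 3 → ℝ) +ᵥ C₃) ⊆ (P ∩ ((y : Fin 3 → ℝ) +ᵥ C₃)) ∩ B := by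
        intro p hp
        exact ⟨⟨hyP _ hyS hp, hp⟩, hyB _ hyS hp⟩
      calc ENNReal.ofReal (32/3) = volume ((y : Fin 3 → ℝ) +ᵥ C₃) := by
            rw [volume_vadd, hC₃vol]
        _ ≤ _ := measure_mono hsub
    calc ENNReal.ofReal (896/3) = 28 * ENNReal.ofReal (32/3) := by
          rw [← ENNReal.ofReal_ofNat 28, ← ENNReal.ofReal_mul (by norm_num)]
          norm_num
      _ ≤ S'.card * ENNReal.ofReal (32/3) := by
          apply mul_le_mul_left
          exact_mod_cast Nat.cast_le.mpr (hS'card ▸ hcard)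
      _ = ∑ _x ∈ S', ENNReal.ofReal (32/3) := by
          rw [Finset.sum_const, nsmul_eq_mul]
      _ ≤ ∑ x ∈ S', volume ((P ∩ ((x : Fin 3 → ℝ) +ᵥ C₃)) ∩ B) :=
          Finset.sum_le_sum hterm
      _ ≤ _ := ENNReal.sum_le_tsum S'
  -- put things together
  have hVle := volume_P_le
  have hVge := volume_P_ge
  have hV0 : volume P ≠ 0 :=
    (lt_of_lt_of_le (ENNReal.ofReal_pos.mpr (by norm_num)) hVge).ne'
  have hVtop : volume P ≠ ⊤ := (lt_of_le_of_lt hVle ENNReal.ofReal_lt_top).ne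
  rw [ENNReal.le_div_iff_mul_le (Or.inl hV0) (Or.inl hVtop)]
  have h288V : ENNReal.ofReal 288 ≤ volume P :=
    le_trans (ENNReal.ofReal_le_ofReal (by norm_num)) hVge
  calc (1 + 1/96 : ℝ≥0∞) * volume P = volume P + (1/96) * volume P := by
        rw [add_mul, one_mul]
    _ ≤ volume P + ENNReal.ofReal (32/3) := by
        apply add_le_add_right
        calc (1/96 : ℝ≥0∞) * volume P ≤ (1/96) * ENNReal.ofReal 1024 :=
              mul_le_mul_right hVle _
          _ = ENNReal.ofReal (32/3) := by
              rw [← ENNReal.ofReal_ofNat 96, ← ENNReal.ofReal_one,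
                ← ENNReal.ofReal_div_of_pos (by norm_num), ← ENNReal.ofReal_mul (by positivity)]
              norm_num
    _ = (volume P - ENNReal.ofReal 288) + ENNReal.ofReal (896/3) := by
        rw [show (896/3:ℝ) = 288 + 32/3 by norm_num,
          ENNReal.ofReal_add (by norm_num) (by norm_num), ← add_assoc,
          tsub_add_cancel_of_le h288V]
    _ ≤ (∑' x : X, volume ((P ∩ ((x : Fin 3 → ℝ) +ᵥ C₃)) ∩ B))
        + ∑' x : X, volume ((P \ B) ∩ ((x : Fin 3 → ℝ) +ᵥ C₃)) := by
        rw [add_comm]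
        exact add_le_add hinner houter
    _ = N := hsplit.symm
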